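/- arXiv:0909.2120 — 2 statements merged into one kernel-verified Lean document; each statement's English description precedes it below -/
import Mathlib

section
/- Let I^c be a non-null intricacy, d ≥ 2 and x ∈ [0,1]. If X^N ∈ X(d,N) is a sequence with lim_{N→∞} H(X^N)/(N log d) = x, then limsup_{N→∞} I^c(X^N)/(N log d) ≤ i^c(x). -/
open Filter

noncomputable def entropy {α : Type*} [Fintype α] (p : α → ℝ) : ℝ :=
  -∑ x, p x * Real.log (p x)

def IsPMF {α : Type*} [Fintype α] (p : α → ℝ) : Prop :=
  (∀ x, 0 ≤ p x) ∧ ∑ x, p x = 1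

noncomputable def margin {d N : ℕ} (μ : (Fin N → Fin d) → ℝ) (S : Finset (Fin N)) :
    (({ i // i ∈ S }) → Fin d) → ℝ :=
  fun y => ∑ x : Fin N → Fin d, if ∀ i : { i // i ∈ S }, x i.1 = y i then μ x else 0

/-- Mutual information between `X_S` and `X_{Sᶜ}`. -/
noncomputable def MIS {d N : ℕ} (μ : (Fin N → Fin d) → ℝ) (S : Finset (Fin N)) : ℝ :=
  entropy (margin μ S) + entropy (margin μ Sᶜ) - entropy μ

/-- The Edelman–Sporns–Tononi neural complexity. -/
noncomputable def neural {d N : ℕ} (μ : (Fin N → Fin d) → ℝ) : ℝ :=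
  (1 / (N + 1 : ℝ)) * ∑ S : Finset (Fin N), (1 / (N.choose S.card : ℝ)) * MIS μ S

noncomputable def avgEntropy {d N : ℕ} (μ : (Fin N → Fin d) → ℝ) (k : ℕ) : ℝ :=
  (1 / (N.choose k : ℝ)) *
    ∑ S ∈ Finset.powersetCard k (Finset.univ : Finset (Fin N)), entropy (margin μ S)

/-- The entropy profile `h_X : [0,1] → [0,1]`, piecewise affine interpolation of
`k/N ↦ (average entropy of subsystems of size k)/(N log d)`. -/
noncomputable def profile {d N : ℕ} (μ : (Fin N → Fin d) → ℝ) (t : ℝ) : ℝ :=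
  if t ≤ 0 then 0 else
    (avgEntropy μ (⌈t * N⌉.toNat - 1)
      + (t * N - ((⌈t * N⌉.toNat - 1 : ℕ) : ℝ)) *
        (avgEntropy μ ⌈t * N⌉.toNat - avgEntropy μ (⌈t * N⌉.toNat - 1)))
      / (N * Real.log d)

open MeasureTheory

/-- The coefficients `c^N_k = ∫ t^k (1−t)^{N−k} λ(dt)` of an intricacy with representing
measure `λ`. -/
noncomputable def cNk (lam : Measure ℝ) (N k : ℕ) : ℝ :=
  ∫ t, t ^ k * (1 - t) ^ (N - k) ∂lam

/-- `lam` is the representing measure of a non-null intricacy: a probability measure carried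
by `[0,1]`, invariant under `t ↦ 1 − t`, with `λ((0,1)) > 0`. -/
def IsIntricacyMeasure (lam : Measure ℝ) : Prop :=
  IsProbabilityMeasure lam ∧ lam (Set.Icc (0:ℝ) 1)ᶜ = 0 ∧
    Measure.map (fun t : ℝ => 1 - t) lam = lam ∧ 0 < lam (Set.Ioo (0:ℝ) 1)

/-- The intricacy `I^c(X) = ∑_{S ⊆ {1,…,N}} c^N_{|S|} · MI(X_S, X_{Sᶜ})` with coefficients
represented by `lam`. -/
noncomputable def intricacy (lam : Measure ℝ) {d N : ℕ} (μ : (Fin N → Fin d) → ℝ) : ℝ :=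
  ∑ S : Finset (Fin N), cNk lam N S.card * MIS μ S

/-- `i^c_N(x) = 2 ∑_{k=0}^N c^N_k C(N,k) min{k/N, x} − x`. -/
noncomputable def icN (lam : Measure ℝ) (N : ℕ) (x : ℝ) : ℝ :=
  2 * ∑ k ∈ Finset.range (N + 1),
    cNk lam N k * (N.choose k : ℝ) * min ((k : ℝ) / N) x - x

/-- `i^c(x) = 2 ∫ min{t,x} λ(dt) − x`. -/
noncomputable def ic (lam : Measure ℝ) (x : ℝ) : ℝ :=
  2 * ∫ t, min t x ∂lam - x

/-- `‖f‖_{c,N} = ∑_{k=0}^N c^N_k C(N,k) |f(k/N)|`. -/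
noncomputable def cNorm (lam : Measure ℝ) (N : ℕ) (f : ℝ → ℝ) : ℝ :=
  ∑ k ∈ Finset.range (N + 1), cNk lam N k * (N.choose k : ℝ) * |f ((k : ℝ) / N)|

/-- The topological support of a measure on `ℝ`. -/
def mSupport (lam : Measure ℝ) : Set ℝ :=
  {x | ∀ U : Set ℝ, IsOpen U → x ∈ U → lam U ≠ 0}


section EntropyBasics

variable {α : Type*} [Fintype α]

lemma isPMF_le_one {p : α → ℝ} (hp : IsPMF p) (x : α) : p x ≤ 1 := by
  rw [← hp.2]
  exact Finset.single_le_sum (fun i _ => hp.1 i) (Finset.mem_univ x)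

lemma entropy_nonneg {p : α → ℝ} (hp : IsPMF p) : 0 ≤ entropy p := by
  rw [entropy, neg_nonneg]
  exact Finset.sum_nonpos fun x _ =>
    mul_nonpos_of_nonneg_of_nonpos (hp.1 x) (Real.log_nonpos (hp.1 x) (isPMF_le_one hp x))

lemma entropy_le_log_card {p : α → ℝ} (hp : IsPMF p) (hα : 0 < Fintype.card α) :
    entropy p ≤ Real.log (Fintype.card α) := by
  set c : ℝ := (Fintype.card α : ℝ) with hc
  have hc0 : 0 < c := by rw [hc]; exact_mod_cast hα
  have key : ∀ x : α, -(p x * Real.log (p x)) - p x * Real.log c ≤ 1 / c - p x := by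
    intro x
    rcases eq_or_lt_of_le (hp.1 x) with h | h
    · rw [← h]
      simp
      positivity
    · have hcp : 0 < c * p x := by positivity
      have h1 : Real.log ((c * p x)⁻¹) ≤ (c * p x)⁻¹ - 1 :=
        Real.log_le_sub_one_of_pos (by positivity)
      rw [Real.log_inv] at h1
      have h2 : p x * (-Real.log (c * p x)) ≤ p x * ((c * p x)⁻¹ - 1) :=
        mul_le_mul_of_nonneg_left (by linarith) (hp.1 x)
      rw [Real.log_mul (ne_of_gt hc0) (ne_of_gt h)] at h2
      have h3 : p x * ((c * p x)⁻¹ - 1) = 1 / c - p x := by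
        rw [mul_sub, mul_inv, ← mul_assoc, mul_comm (p x) c⁻¹, mul_assoc,
          mul_inv_cancel₀ (ne_of_gt h), mul_one, one_div, mul_one]
      linarith [h2, h3]
  have hsum := Finset.sum_le_sum fun x (_ : x ∈ Finset.univ) => key x
  have hl : ∑ x, (-(p x * Real.log (p x)) - p x * Real.log c)
      = entropy p - Real.log c := by
    rw [Finset.sum_sub_distrib, ← Finset.sum_mul, hp.2, entropy, Finset.sum_neg_distrib, one_mul]
  have hr : ∑ x : α, (1 / c - p x) = 0 := by
    rw [Finset.sum_sub_distrib, hp.2, Finset.sum_const, Finset.card_univ, nsmul_eq_mul]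
    field_simp
    simp [hc]
  rw [hl, hr] at hsum
  linarith

end EntropyBasics

section MarginBasics

variable {d N : ℕ}

/-- Projection of a configuration to the coordinates in `S`. -/
def projS (S : Finset (Fin N)) (x : Fin N → Fin d) : { i // i ∈ S } → Fin d :=
  fun i => x i.1

lemma margin_eq (μ : (Fin N → Fin d) → ℝ) (S : Finset (Fin N)) (y : { i // i ∈ S } → Fin d) :
    margin μ S y = ∑ x : Fin N → Fin d, if projS S x = y then μ x else 0 := by
  unfold margin
  refine Finset.sum_congr rfl fun x _ => ?_
  congr 1
  simp [projS, funext_iff]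

lemma margin_nonneg {μ : (Fin N → Fin d) → ℝ} (hμ : ∀ x, 0 ≤ μ x) (S : Finset (Fin N))
    (y : { i // i ∈ S } → Fin d) : 0 ≤ margin μ S y := by
  rw [margin_eq]
  refine Finset.sum_nonneg fun x _ => ?_
  split <;> simp [hμ x]

lemma isPMF_margin {μ : (Fin N → Fin d) → ℝ} (hμ : IsPMF μ) (S : Finset (Fin N)) :
    IsPMF (margin μ S) := by
  refine ⟨margin_nonneg hμ.1 S, ?_⟩
  have : ∑ y : { i // i ∈ S } → Fin d, margin μ S y
      = ∑ x : Fin N → Fin d, ∑ y : { i // i ∈ S } → Fin d, if projS S x = y then μ x else 0 := by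
    rw [Finset.sum_comm]
    exact Finset.sum_congr rfl fun y _ => margin_eq μ S y
  rw [this, ← hμ.2]
  refine Finset.sum_congr rfl fun x _ => ?_
  rw [Finset.sum_ite_eq Finset.univ (projS S x) fun _ => μ x]
  simp

lemma le_margin {μ : (Fin N → Fin d) → ℝ} (hμ : ∀ x, 0 ≤ μ x) (S : Finset (Fin N))
    (x : Fin N → Fin d) : μ x ≤ margin μ S (projS S x) := by
  rw [margin_eq]
  have := Finset.single_le_sum
    (f := fun x' : Fin N → Fin d => if projS S x' = projS S x then μ x' else 0)
    (fun x' _ => by split <;> simp [hμ x']) (Finset.mem_univ x)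
  simpa using this

lemma sum_margin_mul_log (μ : (Fin N → Fin d) → ℝ) (S : Finset (Fin N)) :
    ∑ y, margin μ S y * Real.log (margin μ S y)
      = ∑ x, μ x * Real.log (margin μ S (projS S x)) := by
  have step1 : ∀ y : { i // i ∈ S } → Fin d,
      margin μ S y * Real.log (margin μ S y)
        = ∑ x : Fin N → Fin d, if projS S x = y then μ x * Real.log (margin μ S y) else 0 := by
    intro y
    rw [margin_eq, Finset.sum_mul]
    exact Finset.sum_congr rfl fun x _ => by split <;> simp
  rw [Finset.sum_congr rfl fun y _ => step1 y, Finset.sum_comm]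
  refine Finset.sum_congr rfl fun x _ => ?_
  rw [Finset.sum_ite_eq Finset.univ (projS S x)
    fun y => μ x * Real.log (margin μ S y)]
  simp

lemma entropy_margin_le_entropy {μ : (Fin N → Fin d) → ℝ} (hμ : IsPMF μ) (S : Finset (Fin N)) :
    entropy (margin μ S) ≤ entropy μ := by
  rw [entropy, entropy, neg_le_neg_iff, sum_margin_mul_log]
  refine Finset.sum_le_sum fun x _ => ?_
  rcases eq_or_lt_of_le (hμ.1 x) with h | h
  · rw [← h]; simp
  · exact mul_le_mul_of_nonneg_left
      (Real.log_le_log h (le_margin hμ.1 S x)) (hμ.1 x)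

lemma entropy_margin_le_card {μ : (Fin N → Fin d) → ℝ} (hμ : IsPMF μ) (hd : 2 ≤ d)
    (S : Finset (Fin N)) : entropy (margin μ S) ≤ (S.card : ℝ) * Real.log d := by
  have hcard : Fintype.card ({ i // i ∈ S } → Fin d) = d ^ S.card := by
    rw [Fintype.card_fun, Fintype.card_fin, Fintype.card_coe]
  have h0 : 0 < Fintype.card ({ i // i ∈ S } → Fin d) := by
    rw [hcard]; positivity
  have := entropy_le_log_card (isPMF_margin hμ S) h0
  rwa [hcard, Nat.cast_pow, Real.log_pow] at this

lemma entropy_le_N_log_d {μ : (Fin N → Fin d) → ℝ} (hμ : IsPMF μ) (hd : 2 ≤ d) :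
    entropy μ ≤ (N : ℝ) * Real.log d := by
  have hcard : Fintype.card (Fin N → Fin d) = d ^ N := by
    rw [Fintype.card_fun, Fintype.card_fin, Fintype.card_fin]
  have h0 : 0 < Fintype.card (Fin N → Fin d) := by rw [hcard]; positivity
  have := entropy_le_log_card hμ h0
  rwa [hcard, Nat.cast_pow, Real.log_pow] at this

end MarginBasics

section CNkBasics
open MeasureTheory

lemma ae_mem_Icc {lam : Measure ℝ} (hlam : IsIntricacyMeasure lam) :
    ∀ᵐ t ∂lam, t ∈ Set.Icc (0:ℝ) 1 := by
  rw [MeasureTheory.ae_iff]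
  simpa [Set.compl_def] using hlam.2.1

lemma integrable_of_bdd {lam : Measure ℝ} (hlam : IsIntricacyMeasure lam)
    {f : ℝ → ℝ} (hf : Continuous f) {C : ℝ}
    (hC : ∀ t ∈ Set.Icc (0:ℝ) 1, |f t| ≤ C) : Integrable f lam := by
  haveI := hlam.1
  refine Integrable.mono' (integrable_const C) hf.aestronglyMeasurable ?_
  filter_upwards [ae_mem_Icc hlam] with t ht
  exact hC t ht

lemma integrable_poly {lam : Measure ℝ} (hlam : IsIntricacyMeasure lam) (N k : ℕ) :
    Integrable (fun t : ℝ => t ^ k * (1 - t) ^ (N - k)) lam := by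
  refine integrable_of_bdd hlam (by continuity) (C := 1) fun t ht => ?_
  have h1 : |t| ≤ 1 := abs_le.2 ⟨by linarith [ht.1], ht.2⟩
  have h2 : |1 - t| ≤ 1 := abs_le.2 ⟨by linarith [ht.2], by linarith [ht.1]⟩
  rw [abs_mul, abs_pow, abs_pow]
  exact mul_le_one₀ (pow_le_one₀ (abs_nonneg _) h1) (by positivity)
    (pow_le_one₀ (abs_nonneg _) h2)

lemma cNk_nonneg {lam : Measure ℝ} (hlam : IsIntricacyMeasure lam) (N k : ℕ) :
    0 ≤ cNk lam N k := by
  rw [cNk]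
  refine integral_nonneg_of_ae ?_
  filter_upwards [ae_mem_Icc hlam] with t ht
  exact mul_nonneg (pow_nonneg ht.1 _) (pow_nonneg (by linarith [ht.2]) _)

lemma cNk_symm {lam : Measure ℝ} (hlam : IsIntricacyMeasure lam) {N k : ℕ} (hk : k ≤ N) :
    cNk lam N (N - k) = cNk lam N k := by
  rw [cNk, cNk]
  conv_lhs => rw [← hlam.2.2.1]
  rw [integral_map (by fun_prop)
    (Continuous.aestronglyMeasurable (by continuity))]
  refine integral_congr_ae (Filter.Eventually.of_forall fun t => ?_)
  simp only [Nat.sub_sub_self hk, sub_sub_cancel]; exact mul_comm _ _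

lemma sum_choose_cNk {lam : Measure ℝ} (hlam : IsIntricacyMeasure lam) (N : ℕ) :
    ∑ k ∈ Finset.range (N + 1), (N.choose k : ℝ) * cNk lam N k = 1 := by
  haveI := hlam.1
  have h1 : ∀ k ∈ Finset.range (N + 1), (N.choose k : ℝ) * cNk lam N k
      = ∫ t, (N.choose k : ℝ) * (t ^ k * (1 - t) ^ (N - k)) ∂lam := fun k _ =>
    (MeasureTheory.integral_const_mul _ _).symm
  rw [Finset.sum_congr rfl h1,
    ← integral_finset_sum _ (fun k _ => (integrable_poly hlam N k).const_mul _)]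
  have h2 : ∀ t : ℝ, ∑ k ∈ Finset.range (N + 1),
      (N.choose k : ℝ) * (t ^ k * (1 - t) ^ (N - k)) = 1 := by
    intro t
    have h := add_pow t (1 - t) N
    simp only [add_sub_cancel, one_pow] at h
    calc ∑ k ∈ Finset.range (N + 1), (N.choose k : ℝ) * (t ^ k * (1 - t) ^ (N - k))
        = ∑ k ∈ Finset.range (N + 1), t ^ k * (1 - t) ^ (N - k) * (N.choose k : ℝ) :=
          Finset.sum_congr rfl fun k _ => by ring
      _ = 1 := h.symm
  simp only [h2]
  simp

end CNkBasics

section Bernstein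
open MeasureTheory

lemma integrable_min {lam : Measure ℝ} (hlam : IsIntricacyMeasure lam)
    {x : ℝ} (hx : x ∈ Set.Icc (0:ℝ) 1) :
    Integrable (fun t : ℝ => min t x) lam := by
  refine integrable_of_bdd hlam (continuous_id.min continuous_const) (C := 1) fun t ht => ?_
  rw [abs_le]
  constructor
  · have := le_min ht.1 hx.1
    linarith
  · exact le_trans (min_le_right _ _) hx.2

lemma tendsto_sum_cNk_min {lam : Measure ℝ} (hlam : IsIntricacyMeasure lam)
    {x : ℝ} (hx : x ∈ Set.Icc (0:ℝ) 1) :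
    Tendsto (fun N : ℕ => ∑ k ∈ Finset.range (N + 1),
        cNk lam N k * (N.choose k : ℝ) * min ((k : ℝ) / N) x) atTop
      (nhds (∫ t, min t x ∂lam)) := by
  haveI := hlam.1
  set g : C(unitInterval, ℝ) := ⟨fun t => min (t : ℝ) x,
    (continuous_subtype_val.min continuous_const)⟩ with hg
  set F : ℕ → ℝ := fun N => ∑ k ∈ Finset.range (N + 1),
    cNk lam N k * (N.choose k : ℝ) * min ((k : ℝ) / N) x with hF
  have key : ∀ N : ℕ, |F N - ∫ t, min t x ∂lam| ≤ ‖bernsteinApproximation N g - g‖ := by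
    intro N
    have hPint : ∀ k ∈ Finset.range (N + 1), Integrable
        (fun t : ℝ => min ((k : ℝ) / N) x * ((N.choose k : ℝ) * (t ^ k * (1 - t) ^ (N - k)))) lam :=
      fun k _ => ((integrable_poly hlam N k).const_mul _).const_mul _
    have hFeq : F N = ∫ t, ∑ k ∈ Finset.range (N + 1),
        min ((k : ℝ) / N) x * ((N.choose k : ℝ) * (t ^ k * (1 - t) ^ (N - k))) ∂lam := by
      rw [integral_finset_sum _ hPint, hF]
      refine Finset.sum_congr rfl fun k _ => ?_
      rw [MeasureTheory.integral_const_mul, MeasureTheory.integral_const_mul, ← cNk]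
      ring
    have hsub : Integrable (fun t : ℝ => ∑ k ∈ Finset.range (N + 1),
        min ((k : ℝ) / N) x * ((N.choose k : ℝ) * (t ^ k * (1 - t) ^ (N - k)))) lam :=
      integrable_finset_sum _ hPint
    rw [hFeq, ← integral_sub hsub (integrable_min hlam hx)]
    have hnorm := MeasureTheory.norm_integral_le_of_norm_le_const
      (μ := lam) (C := ‖bernsteinApproximation N g - g‖)
      (f := fun t : ℝ => (∑ k ∈ Finset.range (N + 1),
        min ((k : ℝ) / N) x * ((N.choose k : ℝ) * (t ^ k * (1 - t) ^ (N - k)))) - min t x) ?_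
    · simpa [measure_univ] using hnorm
    · filter_upwards [ae_mem_Icc hlam] with t ht
      set τ : unitInterval := ⟨t, ht⟩ with hτ
      have hterm : ∀ k : Fin (N + 1), (bernstein N (k : ℕ) • ContinuousMap.const _ (g (bernstein.z k))) τ
          = min (((k : ℕ) : ℝ) / N) x
            * ((N.choose (k : ℕ) : ℝ) * (t ^ (k : ℕ) * (1 - t) ^ (N - (k : ℕ)))) := by
        intro k
        rw [ContinuousMap.smul_apply', smul_eq_mul, bernstein_apply, ContinuousMap.const_apply]
        have hz : g (bernstein.z k) = min (((k : ℕ) : ℝ) / N) x := rfl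
        have hτ' : (τ : ℝ) = t := rfl
        rw [hz, hτ']
        ring
      have h1 : bernsteinApproximation N g τ = ∑ k ∈ Finset.range (N + 1),
          min ((k : ℝ) / N) x * ((N.choose k : ℝ) * (t ^ k * (1 - t) ^ (N - k))) := by
        rw [bernsteinApproximation, ContinuousMap.sum_apply,
          Finset.sum_congr rfl (fun k _ => hterm k)]
        exact Fin.sum_univ_eq_sum_range
          (fun m => min ((m : ℝ) / N) x * ((N.choose m : ℝ) * (t ^ m * (1 - t) ^ (N - m)))) (N + 1)
      have h2 : min t x = g τ := rfl
      rw [h2, ← h1]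
      calc ‖(bernsteinApproximation N g) τ - g τ‖
          = ‖(bernsteinApproximation N g - g) τ‖ := by rw [ContinuousMap.sub_apply]
        _ ≤ ‖bernsteinApproximation N g - g‖ := ContinuousMap.norm_coe_le_norm _ _
  have hb : Tendsto (fun N : ℕ => ‖bernsteinApproximation N g - g‖) atTop (nhds 0) := by
    have h := bernsteinApproximation_uniform g
    rwa [tendsto_iff_norm_sub_tendsto_zero] at h
  rw [tendsto_iff_dist_tendsto_zero]
  exact squeeze_zero (fun N => dist_nonneg) (fun N => by rw [Real.dist_eq]; exact key N) hb

end Bernstein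

section KeyBound
open MeasureTheory

lemma key_bound {lam : Measure ℝ} (hlam : IsIntricacyMeasure lam) {d N : ℕ} (hd : 2 ≤ d)
    (hN : 1 ≤ N) {μ : (Fin N → Fin d) → ℝ} (hμ : IsPMF μ) {x : ℝ}
    (hx : x ∈ Set.Icc (0:ℝ) 1) :
    -1 ≤ intricacy lam μ / ((N : ℝ) * Real.log d) ∧
    intricacy lam μ / ((N : ℝ) * Real.log d)
      ≤ 2 * ∑ k ∈ Finset.range (N + 1), cNk lam N k * (N.choose k : ℝ) * min ((k : ℝ) / N) x
        - x + 3 * |entropy μ / ((N : ℝ) * Real.log d) - x| := by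
  set L : ℝ := (N : ℝ) * Real.log d with hLdef
  have hlog : 0 < Real.log d := Real.log_pos (by exact_mod_cast hd)
  have hN0 : 0 < (N : ℝ) := by exact_mod_cast hN
  have hL : 0 < L := mul_pos hN0 hlog
  set h : ℝ := entropy μ / L with hhdef
  have hconv : ∀ G : ℕ → ℝ, ∑ S : Finset (Fin N), cNk lam N S.card * G S.card
      = ∑ k ∈ Finset.range (N + 1), (N.choose k : ℝ) * (cNk lam N k * G k) := by
    intro G
    rw [← Finset.powerset_univ]
    have := Finset.sum_powerset_apply_card (fun m => cNk lam N m * G m)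
      (x := (Finset.univ : Finset (Fin N)))
    simp only [Finset.card_univ, Fintype.card_fin, nsmul_eq_mul] at this
    exact this
  have hdiv : intricacy lam μ / L = ∑ S : Finset (Fin N), cNk lam N S.card * (MIS μ S / L) := by
    rw [intricacy, Finset.sum_div]
    exact Finset.sum_congr rfl fun S _ => mul_div_assoc _ _ _
  have heS : ∀ S : Finset (Fin N), 0 ≤ entropy (margin μ S) :=
    fun S => entropy_nonneg (isPMF_margin hμ S)
  have hH : entropy μ ≤ L := entropy_le_N_log_d hμ hd
  have hH0 : 0 ≤ entropy μ := entropy_nonneg hμ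
  have hc1 : ∑ k ∈ Finset.range (N + 1), (N.choose k : ℝ) * cNk lam N k = 1 :=
    sum_choose_cNk hlam N
  constructor
  · rw [hdiv]
    have hMI : ∀ S : Finset (Fin N), -1 ≤ MIS μ S / L := by
      intro S
      rw [MIS, le_div_iff₀ hL]
      have h1 := heS S
      have h2 := heS Sᶜ
      nlinarith
    have e1 : (-1 : ℝ) = ∑ k ∈ Finset.range (N + 1),
        (N.choose k : ℝ) * (cNk lam N k * (-1)) := by
      simp only [mul_neg_one, mul_neg, Finset.sum_neg_distrib, mul_one, hc1]
    calc (-1 : ℝ) = ∑ k ∈ Finset.range (N + 1), (N.choose k : ℝ) * (cNk lam N k * (-1)) := e1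
      _ = ∑ S : Finset (Fin N), cNk lam N S.card * (-1) := (hconv _).symm
      _ ≤ ∑ S : Finset (Fin N), cNk lam N S.card * (MIS μ S / L) :=
          Finset.sum_le_sum fun S _ =>
            mul_le_mul_of_nonneg_left (hMI S) (cNk_nonneg hlam N S.card)
  · rw [hdiv]
    have hml : ∀ T : Finset (Fin N), entropy (margin μ T) / L ≤ min ((T.card : ℝ) / N) h := by
      intro T
      rw [le_min_iff]
      constructor
      · have h1 := entropy_margin_le_card hμ hd T
        have h2 : entropy (margin μ T) / L ≤ ((T.card : ℝ) * Real.log d) / L := by gcongr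
        rwa [hLdef, mul_div_mul_right _ _ hlog.ne'] at h2
      · rw [hhdef]
        gcongr
        exact entropy_margin_le_entropy hμ T
    have hbound : ∀ S : Finset (Fin N), MIS μ S / L
        ≤ min ((S.card : ℝ) / N) h + min (((N - S.card : ℕ) : ℝ) / N) h - h := by
      intro S
      rw [MIS, sub_div, add_div]
      have h2 := hml S
      have h3 := hml Sᶜ
      rw [Finset.card_compl, Fintype.card_fin] at h3
      rw [← hhdef]
      linarith
    have step1 : ∑ S : Finset (Fin N), cNk lam N S.card * (MIS μ S / L)
        ≤ ∑ S : Finset (Fin N), cNk lam N S.card *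
            (min ((S.card : ℝ) / N) h + min (((N - S.card : ℕ) : ℝ) / N) h - h) :=
      Finset.sum_le_sum fun S _ =>
        mul_le_mul_of_nonneg_left (hbound S) (cNk_nonneg hlam N S.card)
    rw [hconv (fun k => min ((k : ℝ) / N) h + min (((N - k : ℕ) : ℝ) / N) h - h)] at step1
    have hsplit : ∑ k ∈ Finset.range (N + 1), (N.choose k : ℝ) *
          (cNk lam N k * (min ((k : ℝ) / N) h + min (((N - k : ℕ) : ℝ) / N) h - h))
        = (∑ k ∈ Finset.range (N + 1), (N.choose k : ℝ) * (cNk lam N k * min ((k : ℝ) / N) h))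
          + (∑ k ∈ Finset.range (N + 1),
              (N.choose k : ℝ) * (cNk lam N k * min (((N - k : ℕ) : ℝ) / N) h))
          - h := by
      have e2 : ∀ k ∈ Finset.range (N + 1), (N.choose k : ℝ) *
          (cNk lam N k * (min ((k : ℝ) / N) h + min (((N - k : ℕ) : ℝ) / N) h - h))
          = (N.choose k : ℝ) * (cNk lam N k * min ((k : ℝ) / N) h)
            + (N.choose k : ℝ) * (cNk lam N k * min (((N - k : ℕ) : ℝ) / N) h)
            - ((N.choose k : ℝ) * cNk lam N k) * h := fun k _ => by ring
      rw [Finset.sum_congr rfl e2, Finset.sum_sub_distrib, Finset.sum_add_distrib,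
        ← Finset.sum_mul, hc1, one_mul]
    have hreflect : ∑ k ∈ Finset.range (N + 1),
          (N.choose k : ℝ) * (cNk lam N k * min ((k : ℝ) / N) h)
        = ∑ k ∈ Finset.range (N + 1),
          (N.choose k : ℝ) * (cNk lam N k * min (((N - k : ℕ) : ℝ) / N) h) := by
      have h0 := Finset.sum_range_reflect
        (fun j => (N.choose j : ℝ) * (cNk lam N j * min (((N - j : ℕ) : ℝ) / N) h)) (N + 1)
      rw [← h0]
      refine Finset.sum_congr rfl fun j hj => ?_
      have hjN : j ≤ N := Nat.lt_succ_iff.1 (Finset.mem_range.1 hj)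
      have e1 : N + 1 - 1 - j = N - j := by omega
      rw [e1, Nat.choose_symm hjN, cNk_symm hlam hjN, Nat.sub_sub_self hjN]
    have hmin : ∀ a : ℝ, min a h ≤ min a x + |h - x| := by
      intro a
      rcases le_total a x with hax | hax
      · rw [min_eq_left hax]
        exact le_trans (min_le_left a h) (le_add_of_nonneg_right (abs_nonneg _))
      · rw [min_eq_right hax]
        have hh2 : h ≤ x + |h - x| := by
          have := le_abs_self (h - x); linarith
        exact le_trans (min_le_right a h) hh2
    have hsum_min : ∑ k ∈ Finset.range (N + 1),
          (N.choose k : ℝ) * (cNk lam N k * min ((k : ℝ) / N) h)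
        ≤ (∑ k ∈ Finset.range (N + 1),
            (N.choose k : ℝ) * (cNk lam N k * min ((k : ℝ) / N) x)) + |h - x| := by
      have e3 : ∀ k ∈ Finset.range (N + 1),
          (N.choose k : ℝ) * (cNk lam N k * min ((k : ℝ) / N) h)
          ≤ (N.choose k : ℝ) * (cNk lam N k * min ((k : ℝ) / N) x)
            + ((N.choose k : ℝ) * cNk lam N k) * |h - x| := by
        intro k _
        have hm := hmin ((k : ℝ) / N)
        have hc := cNk_nonneg hlam N k
        have hC : (0 : ℝ) ≤ (N.choose k : ℝ) := Nat.cast_nonneg _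
        calc (N.choose k : ℝ) * (cNk lam N k * min ((k : ℝ) / N) h)
            = ((N.choose k : ℝ) * cNk lam N k) * min ((k : ℝ) / N) h := by ring
          _ ≤ ((N.choose k : ℝ) * cNk lam N k) * (min ((k : ℝ) / N) x + |h - x|) :=
              mul_le_mul_of_nonneg_left hm (mul_nonneg hC hc)
          _ = (N.choose k : ℝ) * (cNk lam N k * min ((k : ℝ) / N) x)
              + ((N.choose k : ℝ) * cNk lam N k) * |h - x| := by ring
      calc ∑ k ∈ Finset.range (N + 1), (N.choose k : ℝ) * (cNk lam N k * min ((k : ℝ) / N) h)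
          ≤ ∑ k ∈ Finset.range (N + 1), ((N.choose k : ℝ) * (cNk lam N k * min ((k : ℝ) / N) x)
              + ((N.choose k : ℝ) * cNk lam N k) * |h - x|) := Finset.sum_le_sum e3
        _ = (∑ k ∈ Finset.range (N + 1), (N.choose k : ℝ) * (cNk lam N k * min ((k : ℝ) / N) x))
              + (∑ k ∈ Finset.range (N + 1), (N.choose k : ℝ) * cNk lam N k) * |h - x| := by
            rw [Finset.sum_add_distrib, Finset.sum_mul]
        _ = _ := by rw [hc1, one_mul]
    have hxh : -h ≤ -x + |h - x| := by
      have := neg_abs_le (h - x); linarith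
    have horder : ∑ k ∈ Finset.range (N + 1),
          (N.choose k : ℝ) * (cNk lam N k * min ((k : ℝ) / N) x)
        = ∑ k ∈ Finset.range (N + 1), cNk lam N k * (N.choose k : ℝ) * min ((k : ℝ) / N) x :=
      Finset.sum_congr rfl fun k _ => by ring
    rw [hsplit, ← hreflect] at step1
    rw [horder] at hsum_min
    linarith

end KeyBound

/-- for a non-null intricacy, `d ≥ 2`, `x ∈ [0,1]` and any sequence
`X^N ∈ X(d,N)` with `H(X^N)/(N log d) → x`, one has
`limsup_N I^c(X^N)/(N log d) ≤ i^c(x)`. -/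
theorem stmt7 (lam : Measure ℝ) (hlam : IsIntricacyMeasure lam)
    (d : ℕ) (hd : 2 ≤ d) (x : ℝ) (hx : x ∈ Set.Icc (0:ℝ) 1)
    (X : (N : ℕ) → (Fin N → Fin d) → ℝ) (hpmf : ∀ N, IsPMF (X N))
    (hent : Tendsto (fun N : ℕ => entropy (X N) / (N * Real.log d)) atTop (nhds x)) :
    Filter.limsup (fun N : ℕ => intricacy lam (X N) / (N * Real.log d)) atTop ≤ ic lam x := by
  set u : ℕ → ℝ := fun N => intricacy lam (X N) / (N * Real.log d) with hu
  set v : ℕ → ℝ := fun N => 2 * ∑ k ∈ Finset.range (N + 1),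
      cNk lam N k * (N.choose k : ℝ) * min ((k : ℝ) / N) x - x
      + 3 * |entropy (X N) / ((N : ℝ) * Real.log d) - x| with hv
  have hev : ∀ᶠ N in atTop, u N ≤ v N := by
    filter_upwards [eventually_ge_atTop 1] with N hN
    exact (key_bound hlam hd hN (hpmf N) hx).2
  have hlb : ∀ᶠ N in atTop, (-1 : ℝ) ≤ u N := by
    filter_upwards [eventually_ge_atTop 1] with N hN
    exact (key_bound hlam hd hN (hpmf N) hx).1
  have hvlim : Tendsto v atTop (nhds (ic lam x)) := by
    have h1 := tendsto_sum_cNk_min hlam hx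
    have h2 : Tendsto (fun N : ℕ => |entropy (X N) / ((N : ℝ) * Real.log d) - x|) atTop
        (nhds 0) := by
      have := (hent.sub (tendsto_const_nhds (x := x))).abs
      simpa using this
    have h3 := ((h1.const_mul 2).sub (tendsto_const_nhds (x := x))).add (h2.const_mul 3)
    rw [mul_zero, add_zero] at h3
    exact h3
  have hbdd : IsBoundedUnder (· ≤ ·) atTop v := hvlim.isBoundedUnder_le
  have hcob : IsCoboundedUnder (· ≤ ·) atTop u :=
    Filter.IsBoundedUnder.isCoboundedUnder_le ⟨-1, by simpa [eventually_map] using hlb⟩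
  calc Filter.limsup u atTop ≤ Filter.limsup v atTop := Filter.limsup_le_limsup hev hcob hbdd
    _ = ic lam x := hvlim.limsup_eq
end

section
/- For each integer d ≥ 2 there exists a finite constant H_*(d) with the following property: if N ≥ 1, H ∈ [0,N] is a real number, and Y_1,…,Y_N are random variables defined on a common probability space, each taking values in {0,…,d−1}, such that H(Y_{σ(1)},…,Y_{σ(k)})/log d = min{k, H} for every permutation σ of {1,…,N} and every k = 1,…,N, then H ≤ H_*(d) or N − H ≤ H_*(d). (One may take H_*(d) related to the binomial coefficient C(d² + d − 1, d − 1).) -/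
open Filter

section Push
variable {α β γ : Type*} [Fintype α] [Fintype β] [Fintype γ]

noncomputable def push [DecidableEq β] (p : α → ℝ) (f : α → β) : β → ℝ :=
  fun b => ∑ a, if f a = b then p a else 0

variable [DecidableEq β] [DecidableEq γ]

lemma push_comp (p : α → ℝ) (f : α → β) (h : β → γ) :
    push (push p f) h = push p (h ∘ f) := by
  funext c
  unfold push
  have : ∀ b : β, (if h b = c then (∑ a, if f a = b then p a else 0) else 0)
      = ∑ a, if f a = b then (if h b = c then p a else 0) else 0 := by
    intro b
    by_cases hb : h b = c <;> simp [hb]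
  simp_rw [this]
  rw [Finset.sum_comm]
  refine Finset.sum_congr rfl fun a _ => ?_
  have : ∀ b : β, (if f a = b then (if h b = c then p a else 0) else 0)
      = if f a = b then (if h (f a) = c then p a else 0) else 0 := by
    intro b; by_cases hb : f a = b
    · subst hb; rfl
    · simp [hb]
  simp_rw [this]
  rw [Finset.sum_ite_eq]
  simp

lemma push_nonneg {p : α → ℝ} (hp : ∀ a, 0 ≤ p a) (f : α → β) : ∀ b, 0 ≤ push p f b := by
  intro b
  refine Finset.sum_nonneg fun a _ => ?_
  split <;> simp [hp a]

lemma push_sum (p : α → ℝ) (f : α → β) : ∑ b, push p f b = ∑ a, p a := by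
  unfold push
  rw [Finset.sum_comm]
  refine Finset.sum_congr rfl fun a _ => ?_
  simp

lemma push_isPMF {p : α → ℝ} (hp : IsPMF p) (f : α → β) : IsPMF (push p f) :=
  ⟨push_nonneg hp.1 f, by rw [push_sum, hp.2]⟩

lemma push_self_pos {p : α → ℝ} (hp : ∀ a, 0 ≤ p a) (f : α → β) {a : α} (ha : p a ≠ 0) :
    push p f (f a) ≠ 0 := by
  have h1 : p a ≤ push p f (f a) := by
    unfold push
    have := Finset.single_le_sum (f := fun a' => if f a' = f a then p a' else 0)
      (fun a' _ => by by_cases hx : f a' = f a <;> simp [hx, hp a']) (Finset.mem_univ a)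
    simpa using this
  have := lt_of_lt_of_le (lt_of_le_of_ne (hp a) (Ne.symm ha)) h1
  linarith

lemma push_exists {p : α → ℝ} (f : α → β) {b : β} (hb : push p f b ≠ 0) :
    ∃ a, p a ≠ 0 ∧ f a = b := by
  obtain ⟨a, -, ha⟩ := Finset.exists_ne_zero_of_sum_ne_zero hb
  by_cases hfa : f a = b
  · exact ⟨a, by simpa [hfa] using ha, hfa⟩
  · simp [hfa] at ha

lemma entropy_push_of_injective (q : β → ℝ) (h : β → γ) (hinj : Function.Injective h) :
    entropy (push q h) = entropy q := by
  have key : ∀ b, push q h (h b) = q b := by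
    intro b
    unfold push
    simp [hinj.eq_iff]
  unfold entropy
  congr 1
  rw [show (∑ x : β, q x * Real.log (q x))
      = ∑ c ∈ Finset.univ.image h, push q h c * Real.log (push q h c) by
    rw [Finset.sum_image (fun b _ b' _ hb => hinj hb)]
    exact (Finset.sum_congr rfl fun b _ => by rw [key]).symm]
  refine (Finset.sum_subset (Finset.subset_univ _) fun c _ hc => ?_).symm
  have : push q h c = 0 := by
    unfold push
    refine Finset.sum_eq_zero fun b _ => ?_
    have : h b ≠ c := fun hbc => hc (Finset.mem_image.2 ⟨b, Finset.mem_univ b, hbc⟩)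
    simp [this]
  simp [this]

end Push

section Prod
variable {β γ : Type*} [Fintype β] [Fintype γ] [DecidableEq β] [DecidableEq γ]

lemma push_fst_apply (q : β × γ → ℝ) (b : β) :
    push q Prod.fst b = ∑ c, q (b, c) := by
  unfold push
  rw [Fintype.sum_prod_type]
  have : ∀ b' : β, (∑ c : γ, if (b', c).1 = b then q (b', c) else 0)
      = if b' = b then (∑ c : γ, q (b', c)) else 0 := by
    intro b'
    by_cases hb : b' = b <;> simp [hb]
  simp_rw [this]
  rw [Finset.sum_ite_eq']
  simp

lemma entropy_fst (q : β × γ → ℝ) :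
    entropy (push q Prod.fst) = -∑ b, (∑ c, q (b, c)) * Real.log (∑ c, q (b, c)) := by
  unfold entropy
  simp_rw [push_fst_apply]

lemma entropy_prod (q : β × γ → ℝ) :
    entropy q = -∑ b, ∑ c, q (b, c) * Real.log (q (b, c)) := by
  unfold entropy
  rw [Fintype.sum_prod_type]

/-- Determinism from entropy equality: if `H(q) = H(q_fst)` then the second component is
a.s. a function of the first. -/
lemma det_of_entropy_eq (q : β × γ → ℝ) (hq : ∀ x, 0 ≤ q x)
    (he : entropy q = entropy (push q Prod.fst)) :
    ∀ b c c', q (b, c) ≠ 0 → q (b, c') ≠ 0 → c = c' := by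
  have hW : ∀ b c, q (b, c) ≤ ∑ c', q (b, c') := fun b c =>
    Finset.single_le_sum (fun c' _ => hq (b, c')) (Finset.mem_univ c)
  have hsum : ∑ x : β × γ, q x * Real.log (q x)
      = ∑ x : β × γ, q x * Real.log (∑ c', q (x.1, c')) := by
    have h1 := entropy_prod q
    have h2 := entropy_fst q
    rw [he, h2] at h1
    rw [Fintype.sum_prod_type (f := fun x : β × γ => q x * Real.log (q x)),
        Fintype.sum_prod_type (f := fun x : β × γ => q x * Real.log (∑ c', q (x.1, c')))]
    have h3 : ∀ b, ∑ c, q (b, c) * Real.log (∑ c', q (b, c'))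
        = (∑ c, q (b, c)) * Real.log (∑ c', q (b, c')) := fun b => (Finset.sum_mul _ _ _).symm
    simp_rw [h3]
    linarith
  have hle : ∀ x : β × γ, q x * Real.log (q x) ≤ q x * Real.log (∑ c', q (x.1, c')) := by
    intro x
    rcases eq_or_ne (q x) 0 with h0 | h0
    · simp [h0]
    · have hqpos : 0 < q x := lt_of_le_of_ne (hq x) (Ne.symm h0)
      have := hW x.1 x.2
      exact mul_le_mul_of_nonneg_left (Real.log_le_log hqpos (by exact this)) (hq x)
  have hpt : ∀ x : β × γ, q x * Real.log (q x) = q x * Real.log (∑ c', q (x.1, c')) := by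
    intro x
    exact (Finset.sum_eq_sum_iff_of_le
      (f := fun x : β × γ => q x * Real.log (q x))
      (g := fun x : β × γ => q x * Real.log (∑ c', q (x.1, c')))
      (fun x _ => hle x)).1 hsum x (Finset.mem_univ x)
  intro b c c' hc hc'
  by_contra hne
  have hcpos : 0 < q (b, c) := lt_of_le_of_ne (hq _) (Ne.symm hc)
  have hcpos' : 0 < q (b, c') := lt_of_le_of_ne (hq _) (Ne.symm hc')
  have hWpos : 0 < ∑ c'', q (b, c'') := lt_of_lt_of_le hcpos (hW b c)
  have heq1 : q (b, c) = ∑ c'', q (b, c'') := by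
    have := hpt (b, c)
    have hlog : Real.log (q (b, c)) = Real.log (∑ c'', q (b, c'')) := by
      have := mul_left_cancel₀ hc this
      exact this
    exact Real.log_injOn_pos (Set.mem_Ioi.2 hcpos) (Set.mem_Ioi.2 hWpos) hlog
  have heq2 : q (b, c') = ∑ c'', q (b, c'') := by
    have := hpt (b, c')
    have hlog : Real.log (q (b, c')) = Real.log (∑ c'', q (b, c'')) := by
      exact mul_left_cancel₀ hc' this
    exact Real.log_injOn_pos (Set.mem_Ioi.2 hcpos') (Set.mem_Ioi.2 hWpos) hlog
  have htwo : q (b, c) + q (b, c') ≤ ∑ c'', q (b, c'') := by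
    have hsub : ({c, c'} : Finset γ) ⊆ Finset.univ := Finset.subset_univ _
    have := Finset.sum_le_sum_of_subset_of_nonneg hsub (fun c'' _ _ => hq (b, c''))
    rwa [Finset.sum_pair hne] at this
  linarith

end Prod

section Fiber
variable {β γ : Type*} [Fintype β] [Fintype γ] [DecidableEq β] [DecidableEq γ]

lemma sum_log_bound (w : γ → ℝ) (hw : ∀ c, 0 ≤ w c) (n : ℕ) (hn : 1 ≤ n)
    (hcard : ∀ t : Finset γ, (∀ c ∈ t, w c ≠ 0) → t.card ≤ n) :
    (∑ c, w c) * Real.log (∑ c, w c) - ∑ c, w c * Real.log (w c)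
      ≤ (∑ c, w c) * Real.log n := by
  classical
  set W := ∑ c, w c with hWdef
  have hW0 : 0 ≤ W := Finset.sum_nonneg fun c _ => hw c
  rcases eq_or_lt_of_le hW0 with hW | hWpos
  · -- W = 0, all w c = 0
    have hz : ∀ c ∈ (Finset.univ : Finset γ), w c = 0 := by
      intro c _
      have := (Finset.sum_eq_zero_iff_of_nonneg (fun c _ => hw c)).1 hW.symm
      exact this c (Finset.mem_univ c)
    have : ∑ c, w c * Real.log (w c) = 0 :=
      Finset.sum_eq_zero fun c hc => by rw [hz c hc]; simp
    rw [this, ← hW]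
    simp
  · set s := Finset.univ.filter (fun c => w c ≠ 0) with hs
    have hmem : ∀ c ∈ s, w c ≠ 0 := fun c hc => (Finset.mem_filter.1 hc).2
    have hsn : s.card ≤ n := hcard s hmem
    have hWs : ∑ c ∈ s, w c = W := by
      rw [hWdef]
      exact Finset.sum_filter_ne_zero _
    have hlogs : ∑ c, w c * Real.log (w c) = ∑ c ∈ s, w c * Real.log (w c) := by
      symm
      refine Finset.sum_subset (Finset.subset_univ _) fun c _ hc => ?_
      have : w c = 0 := by
        by_contra hne
        exact hc (Finset.mem_filter.2 ⟨Finset.mem_univ c, hne⟩)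
      simp [this]
    have hn0 : (0:ℝ) < n := by exact_mod_cast hn
    -- key termwise bound on s
    have hterm : ∀ c ∈ s, w c * Real.log W - w c * Real.log (w c)
        ≤ w c * Real.log n + (W / n - w c) := by
      intro c hc
      have hwc : 0 < w c := lt_of_le_of_ne (hw c) (Ne.symm (hmem c hc))
      have h1 : Real.log W - Real.log (w c) = Real.log (W / w c) :=
        (Real.log_div (ne_of_gt hWpos) (ne_of_gt hwc)).symm
      have h2' : W / w c = (n:ℝ) * (W / (n * w c)) := by
        field_simp
      have h2 : Real.log (W / w c) = Real.log n + Real.log (W / (n * w c)) := by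
        rw [h2', Real.log_mul (ne_of_gt hn0) (by positivity)]
      have h3 : Real.log (W / (n * w c)) ≤ W / (n * w c) - 1 :=
        Real.log_le_sub_one_of_pos (by positivity)
      have h4 : w c * Real.log (W / (n * w c)) ≤ W / n - w c := by
        have := mul_le_mul_of_nonneg_left h3 (le_of_lt hwc)
        calc w c * Real.log (W / (n * w c)) ≤ w c * (W / (n * w c) - 1) := this
          _ = W / n - w c := by field_simp
      calc w c * Real.log W - w c * Real.log (w c)
          = w c * (Real.log W - Real.log (w c)) := by ring
        _ = w c * (Real.log n + Real.log (W / (n * w c))) := by rw [h1, h2]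
        _ = w c * Real.log n + w c * Real.log (W / (n * w c)) := by ring
        _ ≤ w c * Real.log n + (W / n - w c) := by linarith
    have hsum := Finset.sum_le_sum hterm
    have hL : ∑ c ∈ s, (w c * Real.log W - w c * Real.log (w c))
        = W * Real.log W - ∑ c ∈ s, w c * Real.log (w c) := by
      rw [Finset.sum_sub_distrib, ← Finset.sum_mul, hWs]
    have hR : ∑ c ∈ s, (w c * Real.log n + (W / n - w c))
        = W * Real.log n + (s.card * (W / n) - W) := by
      rw [Finset.sum_add_distrib, ← Finset.sum_mul, hWs, Finset.sum_sub_distrib, hWs]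
      simp [Finset.sum_const, nsmul_eq_mul]
    have hcardW : (s.card : ℝ) * (W / n) ≤ W := by
      have h1 : (s.card : ℝ) ≤ n := by exact_mod_cast hsn
      have h2 : 0 ≤ W / n := by positivity
      calc (s.card : ℝ) * (W / n) ≤ n * (W / n) := mul_le_mul_of_nonneg_right h1 h2
        _ = W := by field_simp
    rw [hL, hR] at hsum
    rw [hlogs]
    linarith

lemma exists_big_fiber (q : β × γ → ℝ) (hq0 : ∀ x, 0 ≤ q x) (hq1 : ∑ x, q x = 1)
    (n : ℕ) (hn : 1 ≤ n)
    (hgap : entropy (push q Prod.fst) + Real.log n < entropy q) :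
    ∃ b : β, ∃ t : Finset γ, n < t.card ∧ ∀ c ∈ t, q (b, c) ≠ 0 := by
  classical
  by_contra hcon
  push_neg at hcon
  -- hcon : ∀ b t, n < t.card → ∃ c ∈ t, q (b, c) = 0
  have hb : ∀ b : β, ∀ t : Finset γ, (∀ c ∈ t, q (b, c) ≠ 0) → t.card ≤ n := by
    intro b t ht
    by_contra hlt
    push_neg at hlt
    obtain ⟨c, hc, hc0⟩ := hcon b t hlt
    exact ht c hc hc0
  have hper : ∀ b : β, (∑ c, q (b, c)) * Real.log (∑ c, q (b, c))
      - ∑ c, q (b, c) * Real.log (q (b, c)) ≤ (∑ c, q (b, c)) * Real.log n :=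
    fun b => sum_log_bound (fun c => q (b, c)) (fun c => hq0 (b, c)) n hn (hb b)
  have hsumW : ∑ b, ∑ c, q (b, c) = 1 := by
    rw [← hq1, Fintype.sum_prod_type]
  have htot := Finset.sum_le_sum (fun b (_ : b ∈ Finset.univ) => hper b)
  rw [Finset.sum_sub_distrib] at htot
  have hrn : ∑ b, (∑ c, q (b, c)) * Real.log n = Real.log n := by
    rw [← Finset.sum_mul, hsumW, one_mul]
  rw [hrn] at htot
  have he1 := entropy_prod q
  have he2 := entropy_fst q
  linarith [hgap, he1, he2, htot]

end Fiber

section Wrap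
variable {α β γ : Type*} [Fintype α] [Fintype β] [Fintype γ] [DecidableEq β] [DecidableEq γ]

lemma det' {p : α → ℝ} (hp : ∀ a, 0 ≤ p a) (f : α → β) (g : α → γ)
    (hE : entropy (push p (fun a => (f a, g a))) = entropy (push p f)) :
    ∀ a a', p a ≠ 0 → p a' ≠ 0 → f a = f a' → g a = g a' := by
  intro a a' ha ha' hff
  have hcomp : push p f = push (push p (fun a => (f a, g a))) Prod.fst := by
    rw [push_comp]
    rfl
  have hdet := det_of_entropy_eq (push p (fun a => (f a, g a)))
    (push_nonneg hp _) (by rw [hE, hcomp])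
  have h1 : push p (fun a => (f a, g a)) (f a, g a) ≠ 0 :=
    push_self_pos hp (fun a => (f a, g a)) ha
  have h2 : push p (fun a => (f a, g a)) (f a, g a') ≠ 0 := by
    rw [hff]
    exact push_self_pos hp (fun a => (f a, g a)) ha'
  exact hdet (f a) (g a) (g a') h1 h2

lemma entropy_reindex (p : α → ℝ) (g : α → β) (h : β → γ) (M : α → γ)
    (hinj : Function.Injective h) (hM : ∀ a, h (g a) = M a) :
    entropy (push p M) = entropy (push p g) := by
  have : M = h ∘ g := funext fun a => (hM a).symm
  rw [this, ← push_comp, entropy_push_of_injective _ _ hinj]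

end Wrap

lemma margin_eq_push {d N k : ℕ} (μ : (Fin N → Fin d) → ℝ) (σ : Equiv.Perm (Fin N))
    (hk : k ≤ N) :
    (fun y : Fin k → Fin d => ∑ z : Fin N → Fin d,
        if ∀ j : Fin k, z (σ (Fin.castLE hk j)) = y j then μ z else 0)
      = push μ (fun z => fun j : Fin k => z (σ (Fin.castLE hk j))) := by
  funext y
  refine Finset.sum_congr rfl fun z _ => ?_
  refine if_congr ?_ rfl rfl
  exact funext_iff.symm

section Swap
variable {n : ℕ}

lemma swap_mul_fix (a b c e x : Fin n) (h1 : x ≠ c) (h2 : x ≠ e) (h3 : x ≠ a) (h4 : x ≠ b) :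
    (Equiv.swap a b * Equiv.swap c e) x = x := by
  rw [Equiv.Perm.mul_apply, Equiv.swap_apply_of_ne_of_ne h1 h2,
    Equiv.swap_apply_of_ne_of_ne h3 h4]

lemma swap_mul_a (a b c e : Fin n) (h1 : a ≠ c) (h2 : a ≠ e) :
    (Equiv.swap a b * Equiv.swap c e) a = b := by
  rw [Equiv.Perm.mul_apply, Equiv.swap_apply_of_ne_of_ne h1 h2, Equiv.swap_apply_left]

lemma swap_mul_c (a b c e : Fin n) (h1 : e ≠ a) (h2 : e ≠ b) :
    (Equiv.swap a b * Equiv.swap c e) c = e := by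
  rw [Equiv.Perm.mul_apply, Equiv.swap_apply_left, Equiv.swap_apply_of_ne_of_ne h1 h2]

end Swap

def split2 (r d : ℕ) : (Fin (r+2) → Fin d) → ((Fin r → Fin d) × (Fin d × Fin d)) :=
  fun y => (fun j => y (Fin.castLE (by omega) j), (y ⟨r, by omega⟩, y ⟨r+1, by omega⟩))

def split4 (r d : ℕ) : (Fin (r+4) → Fin d) → (((Fin r → Fin d) × (Fin d × Fin d)) × (Fin d × Fin d)) :=
  fun y => ((fun j => y (Fin.castLE (by omega) j), (y ⟨r, by omega⟩, y ⟨r+1, by omega⟩)),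
    (y ⟨r+2, by omega⟩, y ⟨r+3, by omega⟩))

lemma split2_inj (r d : ℕ) : Function.Injective (split2 r d) := by
  intro y y' h
  simp only [split2, Prod.mk.injEq] at h
  obtain ⟨h1, ⟨h2, h3⟩⟩ := h
  funext v
  have hv := v.2
  by_cases hvr : v.1 < r
  · have := congrFun h1 ⟨v.1, hvr⟩
    simpa using this
  · by_cases hvr2 : v.1 = r
    · have hveq : v = ⟨r, by omega⟩ := Fin.ext hvr2
      rw [hveq]; exact h2
    · have hveq : v = ⟨r+1, by omega⟩ := Fin.ext (show v.1 = r+1 by omega)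
      rw [hveq]; exact h3

lemma split4_inj (r d : ℕ) : Function.Injective (split4 r d) := by
  intro y y' h
  simp only [split4, Prod.mk.injEq] at h
  obtain ⟨⟨h1, ⟨h2, h3⟩⟩, ⟨h4, h5⟩⟩ := h
  funext v
  have hv := v.2
  by_cases hvr : v.1 < r
  · have := congrFun h1 ⟨v.1, hvr⟩
    simpa using this
  · by_cases h2' : v.1 = r
    · have hveq : v = ⟨r, by omega⟩ := Fin.ext h2'
      rw [hveq]; exact h2
    by_cases h3' : v.1 = r+1
    · have hveq : v = ⟨r+1, by omega⟩ := Fin.ext h3'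
      rw [hveq]; exact h3
    by_cases h4' : v.1 = r+2
    · have hveq : v = ⟨r+2, by omega⟩ := Fin.ext h4'
      rw [hveq]; exact h4
    · have hveq : v = ⟨r+3, by omega⟩ := Fin.ext (show v.1 = r+3 by omega)
      rw [hveq]; exact h5

set_option maxHeartbeats 1000000 in
lemma key (d r K' : ℕ) (hd : 2 ≤ d) {N : ℕ} (hNeq : N = r + 4 + K')
    (hr1 : 1 ≤ r) (hMK : d ^ (d * d) < K')
    (μ : (Fin N → Fin d) → ℝ) (hμ : IsPMF μ) (H : ℝ)
    (hrH : (r : ℝ) + 1 < H) (hHr : H ≤ (r : ℝ) + 2)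
    (hyp : ∀ σ : Equiv.Perm (Fin N), ∀ k : ℕ, 1 ≤ k → ∀ hk : k ≤ N,
        entropy (fun y : Fin k → Fin d =>
            ∑ z : Fin N → Fin d,
              if ∀ j : Fin k, z (σ (Fin.castLE hk j)) = y j then μ z else 0)
          / Real.log d = min (k : ℝ) H) : False := by
  subst hNeq
  have hd1 : (1:ℝ) < d := by exact_mod_cast hd
  have hlogpos : 0 < Real.log d := Real.log_pos hd1
  have hlogne : Real.log d ≠ 0 := ne_of_gt hlogpos
  -- entropy of prefix margins
  have hyp' : ∀ (σ : Equiv.Perm (Fin (r + 4 + K'))) (k : ℕ), 1 ≤ k → ∀ hk : k ≤ r + 4 + K',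
      entropy (push μ (fun z => fun j : Fin k => z (σ (Fin.castLE hk j))))
        = min (k : ℝ) H * Real.log d := by
    intro σ k hk1 hk
    have h := hyp σ k hk1 hk
    rw [margin_eq_push μ σ hk, div_eq_iff hlogne] at h
    exact h
  -- index bounds
  have hA : r ≤ r + 4 + K' := by omega
  have h2N : r + 2 ≤ r + 4 + K' := by omega
  have h4N : r + 4 ≤ r + 4 + K' := by omega
  have hpr : r < r + 4 + K' := by omega
  have hpr1 : r + 1 < r + 4 + K' := by omega
  have hpr2 : r + 2 < r + 4 + K' := by omega
  have hpr3 : r + 3 < r + 4 + K' := by omega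
  have hw : ∀ i : Fin K', r + 4 + i.1 < r + 4 + K' := fun i => by omega
  -- the "A" margin map and "P" pair map
  -- E1 : entropy of A margin
  have E1 : entropy (push μ (fun z => fun j : Fin r => z (Fin.castLE hA j)))
      = (r : ℝ) * Real.log d := by
    have e1 := hyp' 1 r hr1 hA
    have hfun : (fun (z : Fin (r+4+K') → Fin d) => fun j' : Fin r =>
        z ((1 : Equiv.Perm (Fin (r+4+K'))) (Fin.castLE hA j')))
        = (fun z => fun j' : Fin r => z (Fin.castLE hA j')) := by
      funext z j'
      rw [Equiv.Perm.one_apply]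
    rw [hfun, min_eq_left (by linarith : (r:ℝ) ≤ H)] at e1
    exact e1
  -- E2 : entropy of (A,P) margin
  have E2 : entropy (push μ (fun z =>
      ((fun j : Fin r => z (Fin.castLE hA j)),
        (z ⟨r+2, hpr2⟩, z ⟨r+3, hpr3⟩)))) = H * Real.log d := by
    have e2 := hyp' (Equiv.swap (⟨r, hpr⟩ : Fin (r+4+K')) ⟨r+2, hpr2⟩
      * Equiv.swap (⟨r+1, hpr1⟩ : Fin (r+4+K')) ⟨r+3, hpr3⟩) (r+2) (by omega) h2N
    rw [show min (((r+2:ℕ)):ℝ) H = H from min_eq_right (by push_cast; linarith)] at e2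
    have hM : ∀ z : Fin (r+4+K') → Fin d, split2 r d
        (fun jj : Fin (r+2) => z ((Equiv.swap (⟨r, hpr⟩ : Fin (r+4+K')) ⟨r+2, hpr2⟩
          * Equiv.swap (⟨r+1, hpr1⟩ : Fin (r+4+K')) ⟨r+3, hpr3⟩) (Fin.castLE h2N jj)))
        = ((fun j : Fin r => z (Fin.castLE hA j)), (z ⟨r+2, hpr2⟩, z ⟨r+3, hpr3⟩)) := by
      intro z
      simp only [split2, Prod.mk.injEq]
      refine ⟨?_, ?_, ?_⟩
      · funext j'
        have hj' := j'.2
        congr 1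
        apply swap_mul_fix <;>
          exact Fin.ne_of_val_ne (by simp only [Fin.coe_castLE, Fin.val_mk]; omega)
      · congr 1
        refine swap_mul_a _ _ _ _ ?_ ?_
        · exact Fin.ne_of_val_ne (show r ≠ r+1 by omega)
        · exact Fin.ne_of_val_ne (show r ≠ r+3 by omega)
      · congr 1
        refine swap_mul_c _ _ _ _ ?_ ?_
        · exact Fin.ne_of_val_ne (show r+3 ≠ r by omega)
        · exact Fin.ne_of_val_ne (show r+3 ≠ r+2 by omega)
    have hre := entropy_reindex μ
      (fun z => fun jj : Fin (r+2) => z ((Equiv.swap (⟨r, hpr⟩ : Fin (r+4+K')) ⟨r+2, hpr2⟩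
        * Equiv.swap (⟨r+1, hpr1⟩ : Fin (r+4+K')) ⟨r+3, hpr3⟩) (Fin.castLE h2N jj)))
      (split2 r d)
      (fun z => ((fun j : Fin r => z (Fin.castLE hA j)), (z ⟨r+2, hpr2⟩, z ⟨r+3, hpr3⟩)))
      (split2_inj r d) hM
    rw [hre]
    exact e2
  -- big fiber
  have hq : IsPMF (push μ (fun z =>
      ((fun j : Fin r => z (Fin.castLE hA j)), (z ⟨r+2, hpr2⟩, z ⟨r+3, hpr3⟩)))) :=
    push_isPMF hμ _
  have hfst : entropy (push (push μ (fun z =>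
        ((fun j : Fin r => z (Fin.castLE hA j)), (z ⟨r+2, hpr2⟩, z ⟨r+3, hpr3⟩)))) Prod.fst)
      = (r : ℝ) * Real.log d := by
    rw [push_comp]
    exact E1
  have hgap : entropy (push (push μ (fun z =>
        ((fun j : Fin r => z (Fin.castLE hA j)), (z ⟨r+2, hpr2⟩, z ⟨r+3, hpr3⟩)))) Prod.fst)
        + Real.log d
      < entropy (push μ (fun z =>
        ((fun j : Fin r => z (Fin.castLE hA j)), (z ⟨r+2, hpr2⟩, z ⟨r+3, hpr3⟩)))) := by
    rw [hfst, E2]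
    nlinarith [hlogpos, hrH]
  obtain ⟨b, t, htd, ht⟩ := exists_big_fiber _ hq.1 hq.2 d (by omega) hgap
  -- witnesses
  have hwit : ∀ c : {c // c ∈ t}, ∃ z, μ z ≠ 0 ∧
      ((fun j : Fin r => z (Fin.castLE hA j)), (z ⟨r+2, hpr2⟩, z ⟨r+3, hpr3⟩)) = (b, c.1) :=
    fun c => push_exists _ (ht c.1 c.2)
  choose Z hZ1 hZ2 using hwit
  -- pigeonhole
  have hcardfun : Fintype.card ({c // c ∈ t} → Fin d) < Fintype.card (Fin K') := by
    rw [Fintype.card_fun, Fintype.card_coe, Fintype.card_fin, Fintype.card_fin]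
    calc d ^ t.card ≤ d ^ (d * d) := by
          refine Nat.pow_le_pow_right (by omega) ?_
          calc t.card ≤ Fintype.card (Fin d × Fin d) := Finset.card_le_univ t
            _ = d * d := by rw [Fintype.card_prod, Fintype.card_fin]
      _ < K' := hMK
  obtain ⟨i, j, hij, hΦ⟩ := Fintype.exists_ne_map_eq_of_card_lt
    (fun (i : Fin K') (c : {c // c ∈ t}) => Z c ⟨r + 4 + i.1, hw i⟩) hcardfun
  -- entropy facts for the pair i j
  have hijv : i.1 ≠ j.1 := fun h => hij (Fin.ext h)
  have E4 : entropy (push μ (fun z =>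
      ((fun j' : Fin r => z (Fin.castLE hA j')),
        (z ⟨r + 4 + i.1, hw i⟩, z ⟨r + 4 + j.1, hw j⟩)))) = H * Real.log d := by
    have e4 := hyp' (Equiv.swap (⟨r, hpr⟩ : Fin (r+4+K')) ⟨r + 4 + i.1, hw i⟩
      * Equiv.swap (⟨r+1, hpr1⟩ : Fin (r+4+K')) ⟨r + 4 + j.1, hw j⟩) (r+2) (by omega) h2N
    rw [show min (((r+2:ℕ)):ℝ) H = H from min_eq_right (by push_cast; linarith)] at e4
    have hM : ∀ z : Fin (r+4+K') → Fin d, split2 r d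
        (fun jj : Fin (r+2) => z ((Equiv.swap (⟨r, hpr⟩ : Fin (r+4+K')) ⟨r + 4 + i.1, hw i⟩
          * Equiv.swap (⟨r+1, hpr1⟩ : Fin (r+4+K')) ⟨r + 4 + j.1, hw j⟩) (Fin.castLE h2N jj)))
        = ((fun j' : Fin r => z (Fin.castLE hA j')),
          (z ⟨r + 4 + i.1, hw i⟩, z ⟨r + 4 + j.1, hw j⟩)) := by
      intro z
      simp only [split2, Prod.mk.injEq]
      refine ⟨?_, ?_, ?_⟩
      · funext j'
        have hj' := j'.2
        congr 1
        apply swap_mul_fix <;>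
          exact Fin.ne_of_val_ne (by simp only [Fin.coe_castLE, Fin.val_mk]; omega)
      · congr 1
        refine swap_mul_a _ _ _ _ ?_ ?_
        · exact Fin.ne_of_val_ne (show r ≠ r+1 by omega)
        · exact Fin.ne_of_val_ne (show r ≠ r+4+j.1 by omega)
      · congr 1
        refine swap_mul_c _ _ _ _ ?_ ?_
        · exact Fin.ne_of_val_ne (show r+4+j.1 ≠ r by omega)
        · exact Fin.ne_of_val_ne (show r+4+j.1 ≠ r+4+i.1 by omega)
    have hre := entropy_reindex μ
      (fun z => fun jj : Fin (r+2) => z ((Equiv.swap (⟨r, hpr⟩ : Fin (r+4+K')) ⟨r + 4 + i.1, hw i⟩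
        * Equiv.swap (⟨r+1, hpr1⟩ : Fin (r+4+K')) ⟨r + 4 + j.1, hw j⟩) (Fin.castLE h2N jj)))
      (split2 r d)
      (fun z => ((fun j' : Fin r => z (Fin.castLE hA j')),
        (z ⟨r + 4 + i.1, hw i⟩, z ⟨r + 4 + j.1, hw j⟩)))
      (split2_inj r d) hM
    rw [hre]
    exact e4
  have E5 : entropy (push μ (fun z =>
      (((fun j' : Fin r => z (Fin.castLE hA j')),
        (z ⟨r + 4 + i.1, hw i⟩, z ⟨r + 4 + j.1, hw j⟩)),
        (z ⟨r+2, hpr2⟩, z ⟨r+3, hpr3⟩)))) = H * Real.log d := by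
    have e5 := hyp' (Equiv.swap (⟨r, hpr⟩ : Fin (r+4+K')) ⟨r + 4 + i.1, hw i⟩
      * Equiv.swap (⟨r+1, hpr1⟩ : Fin (r+4+K')) ⟨r + 4 + j.1, hw j⟩) (r+4) (by omega) h4N
    rw [show min (((r+4:ℕ)):ℝ) H = H from min_eq_right (by push_cast; linarith)] at e5
    have hM : ∀ z : Fin (r+4+K') → Fin d, split4 r d
        (fun jj : Fin (r+4) => z ((Equiv.swap (⟨r, hpr⟩ : Fin (r+4+K')) ⟨r + 4 + i.1, hw i⟩
          * Equiv.swap (⟨r+1, hpr1⟩ : Fin (r+4+K')) ⟨r + 4 + j.1, hw j⟩) (Fin.castLE h4N jj)))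
        = (((fun j' : Fin r => z (Fin.castLE hA j')),
          (z ⟨r + 4 + i.1, hw i⟩, z ⟨r + 4 + j.1, hw j⟩)),
          (z ⟨r+2, hpr2⟩, z ⟨r+3, hpr3⟩)) := by
      intro z
      simp only [split4, Prod.mk.injEq]
      refine ⟨⟨?_, ?_, ?_⟩, ?_, ?_⟩
      · funext j'
        have hj' := j'.2
        congr 1
        apply swap_mul_fix <;>
          exact Fin.ne_of_val_ne (by simp only [Fin.coe_castLE, Fin.val_mk]; omega)
      · congr 1
        refine swap_mul_a _ _ _ _ ?_ ?_
        · exact Fin.ne_of_val_ne (show r ≠ r+1 by omega)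
        · exact Fin.ne_of_val_ne (show r ≠ r+4+j.1 by omega)
      · congr 1
        refine swap_mul_c _ _ _ _ ?_ ?_
        · exact Fin.ne_of_val_ne (show r+4+j.1 ≠ r by omega)
        · exact Fin.ne_of_val_ne (show r+4+j.1 ≠ r+4+i.1 by omega)
      · congr 1
        apply swap_mul_fix <;>
          exact Fin.ne_of_val_ne (by simp only [Fin.coe_castLE, Fin.val_mk]; omega)
      · congr 1
        apply swap_mul_fix <;>
          exact Fin.ne_of_val_ne (by simp only [Fin.coe_castLE, Fin.val_mk]; omega)
    have hre := entropy_reindex μ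
      (fun z => fun jj : Fin (r+4) => z ((Equiv.swap (⟨r, hpr⟩ : Fin (r+4+K')) ⟨r + 4 + i.1, hw i⟩
        * Equiv.swap (⟨r+1, hpr1⟩ : Fin (r+4+K')) ⟨r + 4 + j.1, hw j⟩) (Fin.castLE h4N jj)))
      (split4 r d)
      (fun z => (((fun j' : Fin r => z (Fin.castLE hA j')),
        (z ⟨r + 4 + i.1, hw i⟩, z ⟨r + 4 + j.1, hw j⟩)),
        (z ⟨r+2, hpr2⟩, z ⟨r+3, hpr3⟩)))
      (split4_inj r d) hM
    rw [hre]
    exact e5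
  -- determinism : (A, W_i, W_j) determines P on the support
  have det2 := det' (β := (Fin r → Fin d) × (Fin d × Fin d)) (γ := Fin d × Fin d) hμ.1
    (fun z => ((fun j' : Fin r => z (Fin.castLE hA j')),
        (z ⟨r + 4 + i.1, hw i⟩, z ⟨r + 4 + j.1, hw j⟩)))
    (fun z => (z ⟨r+2, hpr2⟩, z ⟨r+3, hpr3⟩))
    (by rw [E5, E4])
  -- injectivity of c ↦ Z c (w i)
  have hinj : Function.Injective (fun c : {c // c ∈ t} => Z c ⟨r + 4 + i.1, hw i⟩) := by
    intro c c' hcc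
    simp only at hcc
    have hjj : Z c ⟨r + 4 + j.1, hw j⟩ = Z c' ⟨r + 4 + j.1, hw j⟩ := by
      have e1 := congrFun hΦ c
      have e2 := congrFun hΦ c'
      try simp only at e1 e2
      rw [← e1, ← e2, hcc]
    have hZ2c := hZ2 c
    have hZ2c' := hZ2 c'
    rw [Prod.mk.injEq] at hZ2c hZ2c'
    have hfeq : (fun z => ((fun j' : Fin r => z (Fin.castLE hA j')),
        (z ⟨r + 4 + i.1, hw i⟩, z ⟨r + 4 + j.1, hw j⟩))) (Z c)
        = (fun z => ((fun j' : Fin r => z (Fin.castLE hA j')),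
        (z ⟨r + 4 + i.1, hw i⟩, z ⟨r + 4 + j.1, hw j⟩))) (Z c') := by
      simp only [Prod.mk.injEq]
      exact ⟨hZ2c.1.trans hZ2c'.1.symm, hcc, hjj⟩
    have hP := det2 (Z c) (Z c') (hZ1 c) (hZ1 c') hfeq
    try simp only at hP
    apply Subtype.ext
    rw [← hZ2c.2, ← hZ2c'.2]
    rw [Prod.mk.injEq] at hP
    rw [hP.1, hP.2]
  have hled : Fintype.card {c // c ∈ t} ≤ d := by
    have := Fintype.card_le_of_injective _ hinj
    rwa [Fintype.card_fin] at this
  rw [Fintype.card_coe] at hled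
  omega

/-- for each `d ≥ 2` there is a finite constant `H_*(d)` such that whenever
`Y_1,…,Y_N` are `{0,…,d−1}`-valued random variables (with joint law `μ`) such that
`H(Y_{σ(1)},…,Y_{σ(k)})/log d = min{k, H}` for every permutation `σ` and every
`k = 1,…,N`, then `H ≤ H_*(d)` or `N − H ≤ H_*(d)`. -/
theorem stmt13 (d : ℕ) (hd : 2 ≤ d) :
    ∃ Hstar : ℝ, ∀ N : ℕ, 1 ≤ N → ∀ H : ℝ, H ∈ Set.Icc (0:ℝ) N →
      ∀ μ : (Fin N → Fin d) → ℝ, IsPMF μ →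
      (∀ σ : Equiv.Perm (Fin N), ∀ k : ℕ, 1 ≤ k → ∀ hk : k ≤ N,
        entropy (fun y : Fin k → Fin d =>
            ∑ z : Fin N → Fin d,
              if ∀ j : Fin k, z (σ (Fin.castLE hk j)) = y j then μ z else 0)
          / Real.log d = min (k : ℝ) H) →
      H ≤ Hstar ∨ (N : ℝ) - H ≤ Hstar := by
  refine ⟨((d ^ (d * d) : ℕ) : ℝ) + 5, ?_⟩
  intro N hN H hH μ hμ hyp
  by_contra hcon
  push_neg at hcon
  obtain ⟨h1, h2⟩ := hcon
  have hMnn : (0:ℝ) ≤ ((d ^ (d * d) : ℕ) : ℝ) := Nat.cast_nonneg _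
  have hH5 : (5:ℝ) < H := by linarith
  set k0 := ⌈H⌉₊ with hk0
  have hk0H : H ≤ (k0:ℝ) := Nat.le_ceil H
  have hk0H' : (k0:ℝ) < H + 1 := Nat.ceil_lt_add_one hH.1
  have hk06 : 5 < k0 := by
    have h5 : (5:ℝ) < (k0:ℝ) := lt_of_lt_of_le hH5 hk0H
    exact_mod_cast h5
  set r := k0 - 2 with hr
  have hrk : r + 2 = k0 := by omega
  have hrcast : (r:ℝ) + 2 = (k0:ℝ) := by
    rw [← hrk]; push_cast; ring
  have hrH : (r:ℝ) + 1 < H := by linarith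
  have hHr : H ≤ (r:ℝ) + 2 := by linarith
  have hr1 : 1 ≤ r := by omega
  have hNlbR : ((r + d ^ (d * d) + 6 : ℕ) : ℝ) < (N : ℝ) := by
    have h2' := h2
    push_cast at h2' ⊢
    linarith
  have hNlb : r + d ^ (d * d) + 6 < N := by exact_mod_cast hNlbR
  set K' := N - (r + 4) with hK'
  have hNeq : N = r + 4 + K' := by omega
  have hMK : d ^ (d * d) < K' := by omega
  exact key d r K' hd hNeq hr1 hMK μ hμ H hrH hHr hyp
end
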